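/- Let G be a finitely generated group and H, H' two benign subgroups of G. Then H ∩ H' is a benign subgroup of G. -/

import Mathlib

namespace Stmt12


/-- A group is finitely presented if it is isomorphic to a presented group with
finitely many generators and finitely many relators. -/
def FinitelyPresentedGroup (K : Type*) [Group K] : Prop :=
  ∃ (n : ℕ) (rels : Set (FreeGroup (Fin n))), rels.Finite ∧
    Nonempty (K ≃* PresentedGroup rels)

/-- A subgroup `H` of a group `G` is benign in `G` if `G` embeds into some finitely
presented group `K` possessing a finitely generated subgroup `L` such that
`G ∩ L = H` (i.e. the preimage of `L` under the embedding is `H`). -/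
def Benign {G : Type*} [Group G] (H : Subgroup G) : Prop :=
  ∃ (K : Type) (_ : Group K) (φ : G →* K) (L : Subgroup K),
    Function.Injective φ ∧ FinitelyPresentedGroup K ∧ L.FG ∧ L.comap φ = H

section Aux

open scoped commutatorElement

variable {α β : Type*} {G : Type*} [Group G]

theorem freeGroup_lift_map (f : β → G) (g : α → β) (x : FreeGroup α) :
    FreeGroup.lift f (FreeGroup.map g x) = FreeGroup.lift (f ∘ g) x := by
  have : (FreeGroup.lift f).comp (FreeGroup.map g) = FreeGroup.lift (f ∘ g) := by
    ext a
    simp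
  exact DFunLike.congr_fun this x

theorem freeGroup_lift_pair {G' : Type*} [Group G'] (f : α → G) (g : α → G')
    (x : FreeGroup α) :
    FreeGroup.lift (fun a => (f a, g a)) x = (FreeGroup.lift f x, FreeGroup.lift g x) := by
  have h1 : (MonoidHom.fst G G').comp (FreeGroup.lift fun a => (f a, g a)) = FreeGroup.lift f := by
    ext a; simp
  have h2 : (MonoidHom.snd G G').comp (FreeGroup.lift fun a => (f a, g a)) = FreeGroup.lift g := by
    ext a; simp
  exact Prod.ext (DFunLike.congr_fun h1 x) (DFunLike.congr_fun h2 x)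

theorem freeGroup_lift_one (x : FreeGroup α) :
    FreeGroup.lift (fun _ : α => (1 : G)) x = 1 := by
  have : FreeGroup.lift (fun _ : α => (1 : G)) = (1 : FreeGroup α →* G) := by
    ext a; simp
  rw [this]; rfl

theorem freeGroup_lift_of_eq_mk {rels : Set (FreeGroup α)} (x : FreeGroup α) :
    FreeGroup.lift (PresentedGroup.of (rels := rels)) x = PresentedGroup.mk rels x :=
  (FreeGroup.lift_unique (PresentedGroup.mk rels) (fun _ => rfl)).symm

theorem presented_mk_eq_one {rels : Set (FreeGroup α)} {x : FreeGroup α} (hx : x ∈ rels) :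
    PresentedGroup.mk rels x = 1 :=
  (QuotientGroup.eq_one_iff x).2 (Subgroup.subset_normalClosure hx)

/-- The product of two finitely presented groups is finitely presented. -/
theorem FinitelyPresentedGroup.prod {A B : Type*} [Group A] [Group B]
    (hA : FinitelyPresentedGroup A) (hB : FinitelyPresentedGroup B) :
    FinitelyPresentedGroup (A × B) := by
  obtain ⟨n, r₁, hr₁, ⟨eA⟩⟩ := hA
  obtain ⟨m, r₂, hr₂, ⟨eB⟩⟩ := hB
  set ι : Type := Sum (Fin n) (Fin m)
  set R : Set (FreeGroup ι) :=
    (FreeGroup.map Sum.inl '' r₁) ∪ (FreeGroup.map Sum.inr '' r₂) ∪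
      Set.range (fun p : Fin n × Fin m =>
        ⁅(FreeGroup.of (Sum.inl p.1) : FreeGroup ι), FreeGroup.of (Sum.inr p.2)⁆) with hR
  have hRfin : R.Finite := ((hr₁.image _).union (hr₂.image _)).union (Set.finite_range _)
  set P1 := PresentedGroup r₁
  set P2 := PresentedGroup r₂
  -- the homomorphism from the presented group to the product
  have hf : ∀ r ∈ R, FreeGroup.lift
      (Sum.elim (fun i => ((PresentedGroup.of i : P1), (1 : P2)))
        (fun j => ((1 : P1), (PresentedGroup.of j : P2)))) r = 1 := by
    rintro r (⟨(⟨w, hw, rfl⟩ | ⟨w, hw, rfl⟩)⟩ | ⟨⟨i, j⟩, rfl⟩)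
    · rw [freeGroup_lift_map]
      have : (Sum.elim (fun i => ((PresentedGroup.of i : P1), (1 : P2)))
          (fun j => ((1 : P1), (PresentedGroup.of j : P2)))) ∘ Sum.inl
          = fun i => ((PresentedGroup.of i : P1), (1 : P2)) := rfl
      rw [this, freeGroup_lift_pair, freeGroup_lift_of_eq_mk, presented_mk_eq_one hw,
        freeGroup_lift_one]
      rfl
    · rw [freeGroup_lift_map]
      have : (Sum.elim (fun i => ((PresentedGroup.of i : P1), (1 : P2)))
          (fun j => ((1 : P1), (PresentedGroup.of j : P2)))) ∘ Sum.inr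
          = fun j => ((1 : P1), (PresentedGroup.of j : P2)) := rfl
      rw [this, freeGroup_lift_pair, freeGroup_lift_of_eq_mk, presented_mk_eq_one hw,
        freeGroup_lift_one]
      rfl
    · rw [map_commutatorElement]
      simp only [FreeGroup.lift_apply_of, Sum.elim_inl, Sum.elim_inr]
      refine commutatorElement_eq_one_iff_commute.2 ?_
      exact Commute.prod (Commute.one_right _) (Commute.one_left _)
  set f : PresentedGroup R →* P1 × P2 := PresentedGroup.toGroup hf with hfdef
  -- the two halves of the inverse
  have hg1 : ∀ r ∈ r₁, FreeGroup.lift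
      (fun i => (PresentedGroup.of (Sum.inl i) : PresentedGroup R)) r = 1 := by
    intro r hr
    have : FreeGroup.lift (fun i => (PresentedGroup.of (Sum.inl i) : PresentedGroup R)) r
        = PresentedGroup.mk R (FreeGroup.map Sum.inl r) := by
      rw [← freeGroup_lift_of_eq_mk, freeGroup_lift_map]; rfl
    rw [this]
    exact presented_mk_eq_one (Or.inl (Or.inl ⟨r, hr, rfl⟩))
  have hg2 : ∀ r ∈ r₂, FreeGroup.lift
      (fun j => (PresentedGroup.of (Sum.inr j) : PresentedGroup R)) r = 1 := by
    intro r hr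
    have : FreeGroup.lift (fun j => (PresentedGroup.of (Sum.inr j) : PresentedGroup R)) r
        = PresentedGroup.mk R (FreeGroup.map Sum.inr r) := by
      rw [← freeGroup_lift_of_eq_mk, freeGroup_lift_map]; rfl
    rw [this]
    exact presented_mk_eq_one (Or.inl (Or.inr ⟨r, hr, rfl⟩))
  set g1 : P1 →* PresentedGroup R := PresentedGroup.toGroup hg1 with hg1def
  set g2 : P2 →* PresentedGroup R := PresentedGroup.toGroup hg2 with hg2def
  have hgencomm : ∀ (i : Fin n) (j : Fin m),
      Commute (PresentedGroup.of (Sum.inl i) : PresentedGroup R)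
        (PresentedGroup.of (Sum.inr j)) := by
    intro i j
    refine commutatorElement_eq_one_iff_commute.1 ?_
    have : (⁅(PresentedGroup.of (Sum.inl i) : PresentedGroup R),
        PresentedGroup.of (Sum.inr j)⁆)
        = PresentedGroup.mk R ⁅(FreeGroup.of (Sum.inl i) : FreeGroup ι), FreeGroup.of (Sum.inr j)⁆ := by
      rw [map_commutatorElement]; rfl
    rw [this]
    exact presented_mk_eq_one (Or.inr ⟨(i, j), rfl⟩)
  have hcomm : ∀ (a : P1) (b : P2), Commute (g1 a) (g2 b) := by
    intro a b
    have ha : a ∈ Subgroup.closure (Set.range (PresentedGroup.of : Fin n → P1)) := by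
      rw [PresentedGroup.closure_range_of]; trivial
    have hb : b ∈ Subgroup.closure (Set.range (PresentedGroup.of : Fin m → P2)) := by
      rw [PresentedGroup.closure_range_of]; trivial
    induction ha using Subgroup.closure_induction with
    | mem x hx =>
      obtain ⟨i, rfl⟩ := hx
      induction hb using Subgroup.closure_induction with
      | mem y hy =>
        obtain ⟨j, rfl⟩ := hy
        simpa +zetaDelta [hg1def, hg2def] using hgencomm i j
      | one => simpa using Commute.one_right _
      | mul y z _ _ hy hz => simpa [map_mul] using hy.mul_right hz
      | inv y _ hy => simpa using hy.inv_right
    | one => simpa using Commute.one_left _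
    | mul x y _ _ hx hy => simpa [map_mul] using hx.mul_left hy
    | inv x _ hx => simpa using hx.inv_left
  set g : P1 × P2 →* PresentedGroup R := MonoidHom.noncommCoprod g1 g2 hcomm with hgdef
  have ffact : ∀ x : ι, f (PresentedGroup.of x) =
      (Sum.elim (fun i => ((PresentedGroup.of i : P1), (1 : P2)))
        (fun j => ((1 : P1), (PresentedGroup.of j : P2)))) x :=
    fun _ => PresentedGroup.toGroup.of hf
  have g1fact : ∀ i : Fin n, g1 (PresentedGroup.of i)
      = (PresentedGroup.of (Sum.inl i) : PresentedGroup R) :=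
    fun _ => PresentedGroup.toGroup.of hg1
  have g2fact : ∀ j : Fin m, g2 (PresentedGroup.of j)
      = (PresentedGroup.of (Sum.inr j) : PresentedGroup R) :=
    fun _ => PresentedGroup.toGroup.of hg2
  have hgf : g.comp f = MonoidHom.id (PresentedGroup R) := by
    ext x
    rcases x with i | j
    · simp [ffact, g1fact, g2fact, hgdef, MonoidHom.noncommCoprod_apply]
    · simp [ffact, g1fact, g2fact, hgdef, MonoidHom.noncommCoprod_apply]
  have hfg : f.comp g = MonoidHom.id (P1 × P2) := by
    have h1 : (f.comp g).comp (MonoidHom.inl P1 P2) = MonoidHom.inl P1 P2 := by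
      refine PresentedGroup.ext fun i => ?_
      simp +zetaDelta [ffact, g1fact, g2fact, hgdef, MonoidHom.noncommCoprod_apply]
    have h2 : (f.comp g).comp (MonoidHom.inr P1 P2) = MonoidHom.inr P1 P2 := by
      refine PresentedGroup.ext fun j => ?_
      simp +zetaDelta [ffact, g1fact, g2fact, hgdef, MonoidHom.noncommCoprod_apply]
    refine MonoidHom.ext fun x => ?_
    obtain ⟨a, b⟩ := x
    have hab : (a, b) = (a, 1) * (1, b) := by simp
    rw [hab, map_mul, map_mul]
    rw [show ((a, (1 : P2)) : P1 × P2) = MonoidHom.inl P1 P2 a from rfl,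
      show (((1 : P1), b) : P1 × P2) = MonoidHom.inr P1 P2 b from rfl]
    rw [← MonoidHom.comp_apply, ← MonoidHom.comp_apply, h1, h2]
    simp
  set e0 : PresentedGroup R ≃* P1 × P2 := MonoidHom.toMulEquiv f g hgf hfg
  -- transport along `finSumFinEquiv`
  set e : ι ≃ Fin (n + m) := finSumFinEquiv
  refine ⟨n + m, FreeGroup.freeGroupCongr e '' R, hRfin.image _, ⟨?_⟩⟩
  exact ((eA.prodCongr eB).trans e0.symm).trans (PresentedGroup.equivPresentedGroup R e)

end Aux

/-- If `H` and `H'` are benign subgroups of a finitely generated group `G`, then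
`H ∩ H'` is benign in `G`. -/
theorem benign_inf {G : Type*} [Group G] [Group.FG G] (H H' : Subgroup G)
    (hH : Benign H) (hH' : Benign H') : Benign (H ⊓ H') := by
  obtain ⟨K, _, φ, L, hinj, hfp, hLfg, hcom⟩ := hH
  obtain ⟨K', _, φ', L', hinj', hfp', hLfg', hcom'⟩ := hH'
  refine ⟨K × K', inferInstance, φ.prod φ', L.prod L', ?_, hfp.prod hfp', ?_, ?_⟩
  · intro a b hab
    exact hinj (congrArg Prod.fst hab)
  · obtain ⟨S, hS⟩ := hLfg
    obtain ⟨T, hT⟩ := hLfg'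
    rw [Subgroup.fg_iff]
    refine ⟨(insert 1 (S : Set K)) ×ˢ (insert 1 (T : Set K')), ?_,
      ((S.finite_toSet.insert 1).prod (T.finite_toSet.insert 1))⟩
    rw [Subgroup.closure_prod (Set.mem_insert 1 _) (Set.mem_insert 1 _)]
    have h1 : Subgroup.closure (insert 1 (S : Set K)) = L := by
      rw [← hS]
      refine le_antisymm ((Subgroup.closure_le _).2 ?_) (Subgroup.closure_mono (Set.subset_insert _ _))
      rintro x (rfl | hx)
      · exact one_mem _
      · exact Subgroup.subset_closure hx
    have h2 : Subgroup.closure (insert 1 (T : Set K')) = L' := by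
      rw [← hT]
      refine le_antisymm ((Subgroup.closure_le _).2 ?_) (Subgroup.closure_mono (Set.subset_insert _ _))
      rintro x (rfl | hx)
      · exact one_mem _
      · exact Subgroup.subset_closure hx
    rw [h1, h2]
  · ext x
    simp only [Subgroup.mem_comap, MonoidHom.prod_apply, Subgroup.mem_prod, Subgroup.mem_inf,
      ← hcom, ← hcom', Subgroup.mem_comap]


end Stmt12
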